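/- Let T be a linear operator on F₀[x,y] (or F[x,y]) with T(xⁿyᵐ) = α_{n,m} xⁿyᵐ for scalars α_{n,m}. If T is an averaging operator, then any two nonzero coefficients are equal: α_{n,m} ≠ 0 and α_{s,t} ≠ 0 imply α_{n,m} = α_{s,t}. Moreover the averaging identities are equivalent to the relations α_{n,m}α_{s,t} = α_{n,m}α_{n+s,m+t} = α_{s,t}α_{n+s,m+t} for all admissible indices. -/

import Mathlib

open MvPolynomial

/-- For a diagonal operator `T(xⁿyᵐ) = α_{n,m} xⁿyᵐ` on `F[x,y]`:
if `T` is averaging then all nonzero coefficients are equal; moreover the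
averaging identities are equivalent to
`α_{n,m}α_{s,t} = α_{n,m}α_{n+s,m+t} = α_{s,t}α_{n+s,m+t}`. -/
theorem stmt19 {F : Type*} [Field F]
    (T : MvPolynomial (Fin 2) F →ₗ[F] MvPolynomial (Fin 2) F)
    (α : ℕ → ℕ → F)
    (hdiag : ∀ n m : ℕ, T (X 0 ^ n * X 1 ^ m) = α n m • (X 0 ^ n * X 1 ^ m)) :
    ((∀ f g : MvPolynomial (Fin 2) F,
        T f * T g = T (T f * g) ∧ T f * T g = T (f * T g)) →
      ∀ n m s t : ℕ, α n m ≠ 0 → α s t ≠ 0 → α n m = α s t) ∧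
    ((∀ f g : MvPolynomial (Fin 2) F,
        T f * T g = T (T f * g) ∧ T f * T g = T (f * T g)) ↔
      (∀ n m s t : ℕ,
        α n m * α s t = α n m * α (n + s) (m + t) ∧
        α n m * α s t = α s t * α (n + s) (m + t))) := by
  set p : ℕ → ℕ → MvPolynomial (Fin 2) F := fun n m => X 0 ^ n * X 1 ^ m with hp
  have mono_eq : ∀ n m : ℕ, p n m = monomial (Finsupp.single 0 n + Finsupp.single 1 m) 1 := by
    intro n m
    rw [hp]
    simp only [X_pow_eq_monomial, monomial_mul, one_mul]
  have pmul : ∀ n m s t : ℕ, p n m * p s t = p (n + s) (m + t) := by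
    intro n m s t
    simp only [hp]
    rw [mul_mul_mul_comm, ← pow_add, ← pow_add]
  have pne : ∀ n m : ℕ, p n m ≠ 0 := by
    intro n m
    rw [mono_eq]
    simp [monomial_eq_zero]
  have mono_eq' : ∀ u : Fin 2 →₀ ℕ, (monomial u (1 : F)) = p (u 0) (u 1) := by
    intro u
    rw [mono_eq]
    congr 1
    have : (Finsupp.single (0 : Fin 2) (u 0) + Finsupp.single 1 (u 1)) = u := by
      ext i
      fin_cases i <;> simp [Finsupp.add_apply]
    rw [this]
  have Tmono : ∀ (u : Fin 2 →₀ ℕ) (a : F), T (monomial u a) = α (u 0) (u 1) • monomial u a := by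
    intro u a
    have h : (monomial u a : MvPolynomial (Fin 2) F) = a • monomial u 1 := by
      rw [smul_monomial, smul_eq_mul, mul_one]
    rw [h, map_smul, mono_eq', hdiag, smul_comm]
  -- forward: averaging → relations
  have fwd : (∀ f g : MvPolynomial (Fin 2) F,
        T f * T g = T (T f * g) ∧ T f * T g = T (f * T g)) →
      (∀ n m s t : ℕ,
        α n m * α s t = α n m * α (n + s) (m + t) ∧
        α n m * α s t = α s t * α (n + s) (m + t)) := by
    intro Havg n m s t
    obtain ⟨h1, h2⟩ := Havg (p n m) (p s t)
    rw [hdiag, hdiag] at h1 h2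
    rw [smul_mul_smul_comm, pmul, smul_mul_assoc, map_smul, pmul, hdiag,
      smul_smul] at h1
    rw [smul_mul_smul_comm, pmul, mul_smul_comm, map_smul, pmul, hdiag,
      smul_smul] at h2
    constructor
    · exact smul_left_injective F (pne (n+s) (m+t)) h1
    · exact smul_left_injective F (pne (n+s) (m+t)) h2
  have bwd : (∀ n m s t : ℕ,
        α n m * α s t = α n m * α (n + s) (m + t) ∧
        α n m * α s t = α s t * α (n + s) (m + t)) →
      (∀ f g : MvPolynomial (Fin 2) F,
        T f * T g = T (T f * g) ∧ T f * T g = T (f * T g)) := by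
    intro H f g
    constructor
    · induction f using MvPolynomial.induction_on' generalizing g with
      | add p q ih1 ih2 => simp [map_add, add_mul, ih1, ih2]
      | monomial u a =>
        induction g using MvPolynomial.induction_on' with
        | add p q ih1 ih2 => simp [map_add, mul_add, ih1, ih2]
        | monomial v b =>
          rw [Tmono, Tmono, smul_mul_smul_comm, smul_mul_assoc, map_smul,
            monomial_mul, Tmono, smul_smul, Finsupp.add_apply,
            Finsupp.add_apply, (H (u 0) (u 1) (v 0) (v 1)).1]
    · induction f using MvPolynomial.induction_on' generalizing g with
      | add p q ih1 ih2 => simp [map_add, add_mul, ih1, ih2]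
      | monomial u a =>
        induction g using MvPolynomial.induction_on' with
        | add p q ih1 ih2 => simp [map_add, mul_add, ih1, ih2]
        | monomial v b =>
          rw [Tmono, Tmono, smul_mul_smul_comm, mul_smul_comm, map_smul,
            monomial_mul, Tmono, smul_smul, Finsupp.add_apply,
            Finsupp.add_apply, (H (u 0) (u 1) (v 0) (v 1)).2]
  constructor
  · intro Havg n m s t hn hs
    obtain ⟨h1, h2⟩ := fwd Havg n m s t
    have e1 : α s t = α (n + s) (m + t) := mul_left_cancel₀ hn h1
    have e2 : α n m = α (n + s) (m + t) := by
      rw [mul_comm] at h2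
      exact mul_left_cancel₀ hs h2
    exact e2.trans e1.symm
  · exact ⟨fwd, bwd⟩
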